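/- Let g = 4 and let B be the positive definite symmetric bilinear form on ℝ⁴ associated to the quadratic form Σ_{i=1}^{4} r_i x_i² + Σ_{1 ≤ i < j ≤ 4, (i,j) ∉ {(1,2),(3,4)}} r_{ij} (x_i − x_j)² + r·q_ω, where q_ω(x) = 2(x₁²+x₂²+x₃²+x₄²) + 2x₁x₂ − 2(x₁+x₂)(x₃+x₄), and all r_i, r_{ij}, r > 0 (i.e. B lies in the relative interior of V₂ ∩ V₃). Then conv{s₁, s₂, s₁+s₂, s₁+s₂+s₃, s₁+s₂+s₄, s₁+s₂+s₃+s₄} is a Delaunay cell of B; it is the union of the two simplices conv{s₁, s₂, s₁+s₂, s₁+s₂+s₃, s₁+s₂+s₃+s₄} and conv{s₁, s₂, s₁+s₂, s₁+s₂+s₄, s₁+s₂+s₃+s₄}, and also the union of the two simplices conv{s₁, s₂, s₁+s₂, s₁+s₂+s₃, s₁+s₂+s₄} and conv{s₁, s₂, s₁+s₂+s₃, s₁+s₂+s₄, s₁+s₂+s₃+s₄}. -/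

import Mathlib

open Matrix Set

noncomputable section

/-- The standard lattice `ℤ^g` sitting inside `ℝ^g`. -/
def latticePts (g : ℕ) : Set (Fin g → ℝ) :=
  Set.range (fun a : Fin g → ℤ => fun i => (a i : ℝ))

/-- `σ` is a (closed) Delaunay cell of the bilinear form `B`: there is an `α ∈ ℝ^g`
such that `σ` is the convex hull of the lattice points nearest to `α`
(with respect to the distance defined by `B`). -/
def IsDelaunayCell {g : ℕ} (B : (Fin g → ℝ) → (Fin g → ℝ) → ℝ)
    (σ : Set (Fin g → ℝ)) : Prop :=
  ∃ α : Fin g → ℝ, σ = convexHull ℝ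
    {a | a ∈ latticePts g ∧ ∀ b ∈ latticePts g, B (a - α) (a - α) ≤ B (b - α) (b - α)}

/-- `C(0,S)`: the cone generated by `S` over the nonnegative reals. -/
def cone0 {g : ℕ} (S : Set (Fin g → ℝ)) : Set (Fin g → ℝ) :=
  {x | ∃ r : ℝ, 0 ≤ r ∧ ∃ y ∈ convexHull ℝ S, x = r • y}

/-- `Semi(0, S ∩ ℤ^g)`: the additive submonoid generated by the lattice points of `S`. -/
def semi0 {g : ℕ} (S : Set (Fin g → ℝ)) : Set (Fin g → ℝ) :=
  (AddSubmonoid.closure (S ∩ latticePts g) : AddSubmonoid (Fin g → ℝ))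

/-- The standard basis vector `s_i` of `ℝ^g`. -/
def stdV (g : ℕ) (i : Fin g) : Fin g → ℝ := Pi.single i 1

/-- Translation of a subset of `ℝ^g` by a lattice vector `v ∈ ℤ^g`. -/
def zTrans {g : ℕ} (v : Fin g → ℤ) (S : Set (Fin g → ℝ)) : Set (Fin g → ℝ) :=
  (fun x => (fun i => (v i : ℝ)) + x) '' S

/-- The rank-one symmetric matrix of the squared linear form `(c ⬝ x)²`. -/
def sqM (c : Fin 4 → ℝ) : Matrix (Fin 4) (Fin 4) ℝ := vecMulVec c c

/-- The matrix of the quadratic form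
`q_ω(x) = 2(x₁²+x₂²+x₃²+x₄²) + 2x₁x₂ − 2(x₁+x₂)(x₃+x₄)`. -/
def Mω : Matrix (Fin 4) (Fin 4) ℝ :=
  !![(2:ℝ), 1, -1, -1; 1, 2, -1, -1; -1, -1, 2, 0; -1, -1, 0, 2]

/-- A point in the relative interior of `V₂ ∩ V₃`: the matrix of
`Σ rᵢ xᵢ² + Σ_{i<j, (i,j)∉{(1,2),(3,4)}} r_{ij} (xᵢ-xⱼ)² + r·q_ω`. -/
def MV2V3 (r₁ r₂ r₃ r₄ r₁₃ r₁₄ r₂₃ r₂₄ r : ℝ) : Matrix (Fin 4) (Fin 4) ℝ :=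
  r₁ • sqM (stdV 4 0) + r₂ • sqM (stdV 4 1) + r₃ • sqM (stdV 4 2) + r₄ • sqM (stdV 4 3)
    + r₁₃ • sqM (stdV 4 0 - stdV 4 2) + r₁₄ • sqM (stdV 4 0 - stdV 4 3)
    + r₂₃ • sqM (stdV 4 1 - stdV 4 2) + r₂₄ • sqM (stdV 4 1 - stdV 4 3)
    + r • Mω

private lemma int_t_nonneg (t : ℤ) : 0 ≤ t * (t - 1) := by
  rcases le_or_gt 1 t with h | h
  · exact mul_nonneg (by linarith) (by linarith)
  · have h0 : t ≤ 0 := by omega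
    nlinarith

private lemma four_arg (z : ℤ) (h : 0 ≤ 4 * z + 2) : 0 ≤ z := by omega

private lemma gInt_nonneg (a b c d : ℤ) :
    0 ≤ 2*(a*a+b*b+c*c+d*d) + 2*a*b - 2*(a+b)*(c+d) - 4*a - 4*b + 2*c + 2*d + 2 := by
  have n1 := int_t_nonneg (a+b-c-d)
  have n2 := int_t_nonneg (a+b-c-d-1)
  have n3 := int_t_nonneg (c-d)
  have n4 := int_t_nonneg (c-d+1)
  have n5 := int_t_nonneg a
  have n6 := int_t_nonneg (a-1)
  have n7 := int_t_nonneg b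
  have n8 := int_t_nonneg (b-1)
  have key : 0 ≤ 4*(a*a+b*b+c*c+d*d+a*b-a*c-a*d-b*c-b*d-2*a-2*b+c+d+1) + 2 := by nlinarith
  have h0 := four_arg _ key
  nlinarith

private lemma six_char (a b c d : ℤ)
    (e1 : a * (a-1) = 0) (e2 : b * (b-1) = 0) (e3 : c * (c-1) = 0) (e4 : d * (d-1) = 0)
    (e13 : (a-c) * (a-c-1) = 0) (e14 : (a-d) * (a-d-1) = 0)
    (e23 : (b-c) * (b-c-1) = 0) (e24 : (b-d) * (b-d-1) = 0)
    (eg : 2*(a*a+b*b+c*c+d*d) + 2*a*b - 2*(a+b)*(c+d) - 4*a - 4*b + 2*c + 2*d + 2 = 0) :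
    (a=1 ∧ b=0 ∧ c=0 ∧ d=0) ∨ (a=0 ∧ b=1 ∧ c=0 ∧ d=0) ∨ (a=1 ∧ b=1 ∧ c=0 ∧ d=0) ∨
    (a=1 ∧ b=1 ∧ c=1 ∧ d=0) ∨ (a=1 ∧ b=1 ∧ c=0 ∧ d=1) ∨ (a=1 ∧ b=1 ∧ c=1 ∧ d=1) := by
  have h1 : a = 0 ∨ a = 1 := by rcases mul_eq_zero.mp e1 with h | h <;> omega
  have h2 : b = 0 ∨ b = 1 := by rcases mul_eq_zero.mp e2 with h | h <;> omega
  have h3 : c = 0 ∨ c = 1 := by rcases mul_eq_zero.mp e3 with h | h <;> omega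
  have h4 : d = 0 ∨ d = 1 := by rcases mul_eq_zero.mp e4 with h | h <;> omega
  rcases h1 with h1 | h1 <;> rcases h2 with h2 | h2 <;> rcases h3 with h3 | h3 <;>
    rcases h4 with h4 | h4 <;> subst h1 <;> subst h2 <;> subst h3 <;> subst h4 <;>
    norm_num at *

private lemma coordzero {c t : ℝ} (hc : 0 < c) (ht : c * t ≤ 0) (h0 : 0 ≤ t) : t = 0 := by
  refine le_antisymm ?_ h0
  rcases mul_nonpos_iff.mp ht with ⟨h1, h2⟩ | ⟨h1, h2⟩
  · linarith
  · linarith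

private lemma bil_expand (r₁ r₂ r₃ r₄ r₁₃ r₁₄ r₂₃ r₂₄ r : ℝ) (x y : Fin 4 → ℝ) :
    x ⬝ᵥ (MV2V3 r₁ r₂ r₃ r₄ r₁₃ r₁₄ r₂₃ r₂₄ r).mulVec y =
      r₁ * (x 0 * y 0) + r₂ * (x 1 * y 1) + r₃ * (x 2 * y 2) + r₄ * (x 3 * y 3)
      + r₁₃ * ((x 0 - x 2) * (y 0 - y 2)) + r₁₄ * ((x 0 - x 3) * (y 0 - y 3))
      + r₂₃ * ((x 1 - x 2) * (y 1 - y 2)) + r₂₄ * ((x 1 - x 3) * (y 1 - y 3))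
      + r * (2*(x 0 * y 0 + x 1 * y 1 + x 2 * y 2 + x 3 * y 3)
          + x 0 * y 1 + x 1 * y 0
          - (x 0 + x 1) * (y 2 + y 3) - (x 2 + x 3) * (y 0 + y 1)) := by
  simp [MV2V3, sqM, Mω, stdV, mulVec, dotProduct, vecMulVec, Fin.sum_univ_four,
    Pi.single_apply, Matrix.cons_val_zero, Matrix.cons_val_one, Matrix.head_cons,
    Matrix.cons_val_two, Matrix.tail_cons, Matrix.cons_val_three, Matrix.head_fin_const,
    Matrix.vecHead, Matrix.vecTail, Function.comp]
  ring

private lemma exists_alpha (r₁ r₂ r₃ r₄ r₁₃ r₁₄ r₂₃ r₂₄ r : ℝ)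
    (h₁ : 0 < r₁) (h₂ : 0 < r₂) (h₃ : 0 < r₃) (h₄ : 0 < r₄)
    (h₁₃ : 0 < r₁₃) (h₁₄ : 0 < r₁₄) (h₂₃ : 0 < r₂₃) (h₂₄ : 0 < r₂₄) (hr : 0 < r) :
    ∃ α : Fin 4 → ℝ, (MV2V3 r₁ r₂ r₃ r₄ r₁₃ r₁₄ r₂₃ r₂₄ r).mulVec α = (2:ℝ)⁻¹ • ![r₁+r₁₃+r₁₄+4*r, r₂+r₂₃+r₂₄+4*r, r₃-r₁₃-r₂₃-2*r, r₄-r₁₄-r₂₄-2*r] := by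
  have hinj : Function.Injective (MV2V3 r₁ r₂ r₃ r₄ r₁₃ r₁₄ r₂₃ r₂₄ r).mulVecLin := by
    rw [← LinearMap.ker_eq_bot, LinearMap.ker_eq_bot']
    intro x hx
    have hx' : (MV2V3 r₁ r₂ r₃ r₄ r₁₃ r₁₄ r₂₃ r₂₄ r).mulVec x = 0 := hx
    have hq : x ⬝ᵥ (MV2V3 r₁ r₂ r₃ r₄ r₁₃ r₁₄ r₂₃ r₂₄ r).mulVec x = 0 := by rw [hx']; simp
    rw [bil_expand] at hq
    have hqω : (0:ℝ) ≤ 2*(x 0 * x 0 + x 1 * x 1 + x 2 * x 2 + x 3 * x 3)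
        + x 0 * x 1 + x 1 * x 0
        - (x 0 + x 1) * (x 2 + x 3) - (x 2 + x 3) * (x 0 + x 1) := by
      nlinarith [sq_nonneg (x 0 + x 1 - x 2 - x 3), sq_nonneg (x 2 - x 3),
        sq_nonneg (x 0), sq_nonneg (x 1)]
    have t1 : (0:ℝ) ≤ r₁ * (x 0 * x 0) := mul_nonneg h₁.le (mul_self_nonneg _)
    have t2 : (0:ℝ) ≤ r₂ * (x 1 * x 1) := mul_nonneg h₂.le (mul_self_nonneg _)
    have t3 : (0:ℝ) ≤ r₃ * (x 2 * x 2) := mul_nonneg h₃.le (mul_self_nonneg _)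
    have t4 : (0:ℝ) ≤ r₄ * (x 3 * x 3) := mul_nonneg h₄.le (mul_self_nonneg _)
    have t5 : (0:ℝ) ≤ r₁₃ * ((x 0 - x 2) * (x 0 - x 2)) := mul_nonneg h₁₃.le (mul_self_nonneg _)
    have t6 : (0:ℝ) ≤ r₁₄ * ((x 0 - x 3) * (x 0 - x 3)) := mul_nonneg h₁₄.le (mul_self_nonneg _)
    have t7 : (0:ℝ) ≤ r₂₃ * ((x 1 - x 2) * (x 1 - x 2)) := mul_nonneg h₂₃.le (mul_self_nonneg _)
    have t8 : (0:ℝ) ≤ r₂₄ * ((x 1 - x 3) * (x 1 - x 3)) := mul_nonneg h₂₄.le (mul_self_nonneg _)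
    have t9 : (0:ℝ) ≤ r * _ := mul_nonneg hr.le hqω
    have k0 : x 0 = 0 := by
      have := coordzero h₁ (t := x 0 * x 0) (by linarith) (mul_self_nonneg _)
      exact mul_self_eq_zero.mp this
    have k1 : x 1 = 0 := by
      have := coordzero h₂ (t := x 1 * x 1) (by linarith) (mul_self_nonneg _)
      exact mul_self_eq_zero.mp this
    have k2 : x 2 = 0 := by
      have := coordzero h₃ (t := x 2 * x 2) (by linarith) (mul_self_nonneg _)
      exact mul_self_eq_zero.mp this
    have k3 : x 3 = 0 := by
      have := coordzero h₄ (t := x 3 * x 3) (by linarith) (mul_self_nonneg _)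
      exact mul_self_eq_zero.mp this
    funext i
    fin_cases i <;> simpa using by first | exact k0 | exact k1 | exact k2 | exact k3
  obtain ⟨α, hαa⟩ := (LinearMap.injective_iff_surjective.mp hinj) ((2:ℝ)⁻¹ • ![r₁+r₁₃+r₁₄+4*r, r₂+r₂₃+r₂₄+4*r, r₃-r₁₃-r₂₃-2*r, r₄-r₁₄-r₂₄-2*r])
  exact ⟨α, by rw [← Matrix.mulVecLin_apply, hαa]⟩

private lemma F_key (r₁ r₂ r₃ r₄ r₁₃ r₁₄ r₂₃ r₂₄ r : ℝ) (n : Fin 4 → ℤ) :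
    ((fun i => ((n i : ℝ))) ⬝ᵥ (MV2V3 r₁ r₂ r₃ r₄ r₁₃ r₁₄ r₂₃ r₂₄ r).mulVec (fun i => ((n i : ℝ)))
      - (fun i => ((n i : ℝ))) ⬝ᵥ ![r₁+r₁₃+r₁₄+4*r, r₂+r₂₃+r₂₄+4*r, r₃-r₁₃-r₂₃-2*r, r₄-r₁₄-r₂₄-2*r]) + 2*r
    = r₁*((n 0*(n 0-1) : ℤ) : ℝ) + r₂*((n 1*(n 1-1) : ℤ) : ℝ)
      + r₃*((n 2*(n 2-1) : ℤ) : ℝ) + r₄*((n 3*(n 3-1) : ℤ) : ℝ)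
      + r₁₃*(((n 0-n 2)*(n 0-n 2-1) : ℤ) : ℝ) + r₁₄*(((n 0-n 3)*(n 0-n 3-1) : ℤ) : ℝ)
      + r₂₃*(((n 1-n 2)*(n 1-n 2-1) : ℤ) : ℝ) + r₂₄*(((n 1-n 3)*(n 1-n 3-1) : ℤ) : ℝ)
      + r*((2*(n 0*n 0+n 1*n 1+n 2*n 2+n 3*n 3) + 2*(n 0)*(n 1)
          - 2*(n 0+n 1)*(n 2+n 3) - 4*(n 0) - 4*(n 1) + 2*(n 2) + 2*(n 3) + 2 : ℤ) : ℝ) := by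
  rw [bil_expand]
  simp only [dotProduct, Fin.sum_univ_four, Matrix.cons_val_zero, Matrix.cons_val_one,
    Matrix.head_cons, Matrix.cons_val_two, Matrix.tail_cons, Matrix.cons_val_three]
  push_cast
  ring

private lemma minimizer_set_eq (r₁ r₂ r₃ r₄ r₁₃ r₁₄ r₂₃ r₂₄ r : ℝ)
    (h₁ : 0 < r₁) (h₂ : 0 < r₂) (h₃ : 0 < r₃) (h₄ : 0 < r₄)
    (h₁₃ : 0 < r₁₃) (h₁₄ : 0 < r₁₄) (h₂₃ : 0 < r₂₃) (h₂₄ : 0 < r₂₄) (hr : 0 < r)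
    (α : Fin 4 → ℝ) (hα : (MV2V3 r₁ r₂ r₃ r₄ r₁₃ r₁₄ r₂₃ r₂₄ r).mulVec α = (2:ℝ)⁻¹ • ![r₁+r₁₃+r₁₄+4*r, r₂+r₂₃+r₂₄+4*r, r₃-r₁₃-r₂₃-2*r, r₄-r₁₄-r₂₄-2*r]) :
    {a | a ∈ latticePts 4 ∧ ∀ b ∈ latticePts 4,
        (a - α) ⬝ᵥ (MV2V3 r₁ r₂ r₃ r₄ r₁₃ r₁₄ r₂₃ r₂₄ r).mulVec (a - α) ≤ (b - α) ⬝ᵥ (MV2V3 r₁ r₂ r₃ r₄ r₁₃ r₁₄ r₂₃ r₂₄ r).mulVec (b - α)}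
    = {stdV 4 0, stdV 4 1, stdV 4 0 + stdV 4 1, stdV 4 0 + stdV 4 1 + stdV 4 2, stdV 4 0 + stdV 4 1 + stdV 4 3, stdV 4 0 + stdV 4 1 + stdV 4 2 + stdV 4 3} := by
  have hdotα : ∀ v : Fin 4 → ℝ, v ⬝ᵥ (MV2V3 r₁ r₂ r₃ r₄ r₁₃ r₁₄ r₂₃ r₂₄ r).mulVec α = 2⁻¹ * (v ⬝ᵥ ![r₁+r₁₃+r₁₄+4*r, r₂+r₂₃+r₂₄+4*r, r₃-r₁₃-r₂₃-2*r, r₄-r₁₄-r₂₄-2*r]) := by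
    intro v; rw [hα, dotProduct_smul, smul_eq_mul]
  have hshift : ∀ v : Fin 4 → ℝ, (v - α) ⬝ᵥ (MV2V3 r₁ r₂ r₃ r₄ r₁₃ r₁₄ r₂₃ r₂₄ r).mulVec (v - α)
      = (v ⬝ᵥ (MV2V3 r₁ r₂ r₃ r₄ r₁₃ r₁₄ r₂₃ r₂₄ r).mulVec v - v ⬝ᵥ ![r₁+r₁₃+r₁₄+4*r, r₂+r₂₃+r₂₄+4*r, r₃-r₁₃-r₂₃-2*r, r₄-r₁₄-r₂₄-2*r])
        + α ⬝ᵥ (MV2V3 r₁ r₂ r₃ r₄ r₁₃ r₁₄ r₂₃ r₂₄ r).mulVec α := by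
    intro v
    have e1 := bil_expand r₁ r₂ r₃ r₄ r₁₃ r₁₄ r₂₃ r₂₄ r (v - α) (v - α)
    simp only [Pi.sub_apply] at e1
    have e2 := hdotα v
    rw [bil_expand] at e2
    rw [e1, bil_expand r₁ r₂ r₃ r₄ r₁₃ r₁₄ r₂₃ r₂₄ r v v, bil_expand r₁ r₂ r₃ r₄ r₁₃ r₁₄ r₂₃ r₂₄ r α α]
    linear_combination -2 * e2
  have hFle : ∀ n : Fin 4 → ℤ,
      -(2*r) ≤ (fun i => ((n i : ℝ))) ⬝ᵥ (MV2V3 r₁ r₂ r₃ r₄ r₁₃ r₁₄ r₂₃ r₂₄ r).mulVec (fun i => ((n i : ℝ)))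
        - (fun i => ((n i : ℝ))) ⬝ᵥ ![r₁+r₁₃+r₁₄+4*r, r₂+r₂₃+r₂₄+4*r, r₃-r₁₃-r₂₃-2*r, r₄-r₁₄-r₂₄-2*r] := by
    intro n
    have hk := F_key r₁ r₂ r₃ r₄ r₁₃ r₁₄ r₂₃ r₂₄ r n
    have g1 : (0:ℝ) ≤ r₁*((n 0*(n 0-1) : ℤ) : ℝ) :=
      mul_nonneg h₁.le (by exact_mod_cast int_t_nonneg (n 0))
    have g2 : (0:ℝ) ≤ r₂*((n 1*(n 1-1) : ℤ) : ℝ) :=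
      mul_nonneg h₂.le (by exact_mod_cast int_t_nonneg (n 1))
    have g3 : (0:ℝ) ≤ r₃*((n 2*(n 2-1) : ℤ) : ℝ) :=
      mul_nonneg h₃.le (by exact_mod_cast int_t_nonneg (n 2))
    have g4 : (0:ℝ) ≤ r₄*((n 3*(n 3-1) : ℤ) : ℝ) :=
      mul_nonneg h₄.le (by exact_mod_cast int_t_nonneg (n 3))
    have g5 : (0:ℝ) ≤ r₁₃*(((n 0-n 2)*(n 0-n 2-1) : ℤ) : ℝ) :=
      mul_nonneg h₁₃.le (by exact_mod_cast int_t_nonneg (n 0 - n 2))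
    have g6 : (0:ℝ) ≤ r₁₄*(((n 0-n 3)*(n 0-n 3-1) : ℤ) : ℝ) :=
      mul_nonneg h₁₄.le (by exact_mod_cast int_t_nonneg (n 0 - n 3))
    have g7 : (0:ℝ) ≤ r₂₃*(((n 1-n 2)*(n 1-n 2-1) : ℤ) : ℝ) :=
      mul_nonneg h₂₃.le (by exact_mod_cast int_t_nonneg (n 1 - n 2))
    have g8 : (0:ℝ) ≤ r₂₄*(((n 1-n 3)*(n 1-n 3-1) : ℤ) : ℝ) :=
      mul_nonneg h₂₄.le (by exact_mod_cast int_t_nonneg (n 1 - n 3))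
    have g9 : (0:ℝ) ≤ r*((2*(n 0*n 0+n 1*n 1+n 2*n 2+n 3*n 3) + 2*(n 0)*(n 1)
        - 2*(n 0+n 1)*(n 2+n 3) - 4*(n 0) - 4*(n 1) + 2*(n 2) + 2*(n 3) + 2 : ℤ) : ℝ) :=
      mul_nonneg hr.le (by exact_mod_cast gInt_nonneg (n 0) (n 1) (n 2) (n 3))
    linarith
  have hz1 : (fun i => (((![1,0,0,0] : Fin 4 → ℤ) i : ℝ))) = stdV 4 0 := by
    funext i; fin_cases i <;> simp [stdV, Pi.single_apply]
  have hz2 : (fun i => (((![0,1,0,0] : Fin 4 → ℤ) i : ℝ))) = stdV 4 1 := by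
    funext i; fin_cases i <;> simp [stdV, Pi.single_apply]
  have hz3 : (fun i => (((![1,1,0,0] : Fin 4 → ℤ) i : ℝ))) = stdV 4 0 + stdV 4 1 := by
    funext i; fin_cases i <;> simp [stdV, Pi.single_apply]
  have hz4 : (fun i => (((![1,1,1,0] : Fin 4 → ℤ) i : ℝ))) = stdV 4 0 + stdV 4 1 + stdV 4 2 := by
    funext i; fin_cases i <;> simp [stdV, Pi.single_apply]
  have hz5 : (fun i => (((![1,1,0,1] : Fin 4 → ℤ) i : ℝ))) = stdV 4 0 + stdV 4 1 + stdV 4 3 := by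
    funext i; fin_cases i <;> simp [stdV, Pi.single_apply]
  have hz6 : (fun i => (((![1,1,1,1] : Fin 4 → ℤ) i : ℝ))) = stdV 4 0 + stdV 4 1 + stdV 4 2 + stdV 4 3 := by
    funext i; fin_cases i <;> simp [stdV, Pi.single_apply]
  have hF1 : (fun i => (((![1,0,0,0] : Fin 4 → ℤ) i : ℝ))) ⬝ᵥ (MV2V3 r₁ r₂ r₃ r₄ r₁₃ r₁₄ r₂₃ r₂₄ r).mulVec (fun i => (((![1,0,0,0] : Fin 4 → ℤ) i : ℝ)))
      - (fun i => (((![1,0,0,0] : Fin 4 → ℤ) i : ℝ))) ⬝ᵥ ![r₁+r₁₃+r₁₄+4*r, r₂+r₂₃+r₂₄+4*r, r₃-r₁₃-r₂₃-2*r, r₄-r₁₄-r₂₄-2*r] = -(2*r) := by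
    have hk := F_key r₁ r₂ r₃ r₄ r₁₃ r₁₄ r₂₃ r₂₄ r (![1,0,0,0])
    norm_num [dotProduct, Fin.sum_univ_four, Matrix.cons_val_zero, Matrix.cons_val_one,
      Matrix.head_cons, Matrix.cons_val_two, Matrix.tail_cons, Matrix.cons_val_three,
      Matrix.vecHead, Matrix.vecTail] at hk ⊢
    linarith
  have hF2 : (fun i => (((![0,1,0,0] : Fin 4 → ℤ) i : ℝ))) ⬝ᵥ (MV2V3 r₁ r₂ r₃ r₄ r₁₃ r₁₄ r₂₃ r₂₄ r).mulVec (fun i => (((![0,1,0,0] : Fin 4 → ℤ) i : ℝ)))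
      - (fun i => (((![0,1,0,0] : Fin 4 → ℤ) i : ℝ))) ⬝ᵥ ![r₁+r₁₃+r₁₄+4*r, r₂+r₂₃+r₂₄+4*r, r₃-r₁₃-r₂₃-2*r, r₄-r₁₄-r₂₄-2*r] = -(2*r) := by
    have hk := F_key r₁ r₂ r₃ r₄ r₁₃ r₁₄ r₂₃ r₂₄ r (![0,1,0,0])
    norm_num [dotProduct, Fin.sum_univ_four, Matrix.cons_val_zero, Matrix.cons_val_one,
      Matrix.head_cons, Matrix.cons_val_two, Matrix.tail_cons, Matrix.cons_val_three,
      Matrix.vecHead, Matrix.vecTail] at hk ⊢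
    linarith
  have hF3 : (fun i => (((![1,1,0,0] : Fin 4 → ℤ) i : ℝ))) ⬝ᵥ (MV2V3 r₁ r₂ r₃ r₄ r₁₃ r₁₄ r₂₃ r₂₄ r).mulVec (fun i => (((![1,1,0,0] : Fin 4 → ℤ) i : ℝ)))
      - (fun i => (((![1,1,0,0] : Fin 4 → ℤ) i : ℝ))) ⬝ᵥ ![r₁+r₁₃+r₁₄+4*r, r₂+r₂₃+r₂₄+4*r, r₃-r₁₃-r₂₃-2*r, r₄-r₁₄-r₂₄-2*r] = -(2*r) := by
    have hk := F_key r₁ r₂ r₃ r₄ r₁₃ r₁₄ r₂₃ r₂₄ r (![1,1,0,0])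
    norm_num [dotProduct, Fin.sum_univ_four, Matrix.cons_val_zero, Matrix.cons_val_one,
      Matrix.head_cons, Matrix.cons_val_two, Matrix.tail_cons, Matrix.cons_val_three,
      Matrix.vecHead, Matrix.vecTail] at hk ⊢
    linarith
  have hF4 : (fun i => (((![1,1,1,0] : Fin 4 → ℤ) i : ℝ))) ⬝ᵥ (MV2V3 r₁ r₂ r₃ r₄ r₁₃ r₁₄ r₂₃ r₂₄ r).mulVec (fun i => (((![1,1,1,0] : Fin 4 → ℤ) i : ℝ)))
      - (fun i => (((![1,1,1,0] : Fin 4 → ℤ) i : ℝ))) ⬝ᵥ ![r₁+r₁₃+r₁₄+4*r, r₂+r₂₃+r₂₄+4*r, r₃-r₁₃-r₂₃-2*r, r₄-r₁₄-r₂₄-2*r] = -(2*r) := by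
    have hk := F_key r₁ r₂ r₃ r₄ r₁₃ r₁₄ r₂₃ r₂₄ r (![1,1,1,0])
    norm_num [dotProduct, Fin.sum_univ_four, Matrix.cons_val_zero, Matrix.cons_val_one,
      Matrix.head_cons, Matrix.cons_val_two, Matrix.tail_cons, Matrix.cons_val_three,
      Matrix.vecHead, Matrix.vecTail] at hk ⊢
    linarith
  have hF5 : (fun i => (((![1,1,0,1] : Fin 4 → ℤ) i : ℝ))) ⬝ᵥ (MV2V3 r₁ r₂ r₃ r₄ r₁₃ r₁₄ r₂₃ r₂₄ r).mulVec (fun i => (((![1,1,0,1] : Fin 4 → ℤ) i : ℝ)))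
      - (fun i => (((![1,1,0,1] : Fin 4 → ℤ) i : ℝ))) ⬝ᵥ ![r₁+r₁₃+r₁₄+4*r, r₂+r₂₃+r₂₄+4*r, r₃-r₁₃-r₂₃-2*r, r₄-r₁₄-r₂₄-2*r] = -(2*r) := by
    have hk := F_key r₁ r₂ r₃ r₄ r₁₃ r₁₄ r₂₃ r₂₄ r (![1,1,0,1])
    norm_num [dotProduct, Fin.sum_univ_four, Matrix.cons_val_zero, Matrix.cons_val_one,
      Matrix.head_cons, Matrix.cons_val_two, Matrix.tail_cons, Matrix.cons_val_three,
      Matrix.vecHead, Matrix.vecTail] at hk ⊢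
    linarith
  have hF6 : (fun i => (((![1,1,1,1] : Fin 4 → ℤ) i : ℝ))) ⬝ᵥ (MV2V3 r₁ r₂ r₃ r₄ r₁₃ r₁₄ r₂₃ r₂₄ r).mulVec (fun i => (((![1,1,1,1] : Fin 4 → ℤ) i : ℝ)))
      - (fun i => (((![1,1,1,1] : Fin 4 → ℤ) i : ℝ))) ⬝ᵥ ![r₁+r₁₃+r₁₄+4*r, r₂+r₂₃+r₂₄+4*r, r₃-r₁₃-r₂₃-2*r, r₄-r₁₄-r₂₄-2*r] = -(2*r) := by
    have hk := F_key r₁ r₂ r₃ r₄ r₁₃ r₁₄ r₂₃ r₂₄ r (![1,1,1,1])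
    norm_num [dotProduct, Fin.sum_univ_four, Matrix.cons_val_zero, Matrix.cons_val_one,
      Matrix.head_cons, Matrix.cons_val_two, Matrix.tail_cons, Matrix.cons_val_three,
      Matrix.vecHead, Matrix.vecTail] at hk ⊢
    linarith
  ext a
  simp only [Set.mem_setOf_eq, Set.mem_insert_iff, Set.mem_singleton_iff]
  constructor
  · rintro ⟨⟨n, rfl⟩, hmin⟩
    have hle1 := hmin (stdV 4 0) ⟨![1,0,0,0], hz1⟩
    rw [hshift, hshift] at hle1
    have hv1 : (stdV 4 0) ⬝ᵥ (MV2V3 r₁ r₂ r₃ r₄ r₁₃ r₁₄ r₂₃ r₂₄ r).mulVec (stdV 4 0) - (stdV 4 0) ⬝ᵥ ![r₁+r₁₃+r₁₄+4*r, r₂+r₂₃+r₂₄+4*r, r₃-r₁₃-r₂₃-2*r, r₄-r₁₄-r₂₄-2*r] = -(2*r) := by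
      rw [← hz1]; exact hF1
    have heq : (fun i => ((n i : ℝ))) ⬝ᵥ (MV2V3 r₁ r₂ r₃ r₄ r₁₃ r₁₄ r₂₃ r₂₄ r).mulVec (fun i => ((n i : ℝ)))
        - (fun i => ((n i : ℝ))) ⬝ᵥ ![r₁+r₁₃+r₁₄+4*r, r₂+r₂₃+r₂₄+4*r, r₃-r₁₃-r₂₃-2*r, r₄-r₁₄-r₂₄-2*r] = -(2*r) := by
      have := hFle n
      linarith
    have hk := F_key r₁ r₂ r₃ r₄ r₁₃ r₁₄ r₂₃ r₂₄ r n
    rw [heq] at hk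
    have g1 : (0:ℝ) ≤ r₁*((n 0*(n 0-1) : ℤ) : ℝ) :=
      mul_nonneg h₁.le (by exact_mod_cast int_t_nonneg (n 0))
    have g2 : (0:ℝ) ≤ r₂*((n 1*(n 1-1) : ℤ) : ℝ) :=
      mul_nonneg h₂.le (by exact_mod_cast int_t_nonneg (n 1))
    have g3 : (0:ℝ) ≤ r₃*((n 2*(n 2-1) : ℤ) : ℝ) :=
      mul_nonneg h₃.le (by exact_mod_cast int_t_nonneg (n 2))
    have g4 : (0:ℝ) ≤ r₄*((n 3*(n 3-1) : ℤ) : ℝ) :=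
      mul_nonneg h₄.le (by exact_mod_cast int_t_nonneg (n 3))
    have g5 : (0:ℝ) ≤ r₁₃*(((n 0-n 2)*(n 0-n 2-1) : ℤ) : ℝ) :=
      mul_nonneg h₁₃.le (by exact_mod_cast int_t_nonneg (n 0 - n 2))
    have g6 : (0:ℝ) ≤ r₁₄*(((n 0-n 3)*(n 0-n 3-1) : ℤ) : ℝ) :=
      mul_nonneg h₁₄.le (by exact_mod_cast int_t_nonneg (n 0 - n 3))
    have g7 : (0:ℝ) ≤ r₂₃*(((n 1-n 2)*(n 1-n 2-1) : ℤ) : ℝ) :=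
      mul_nonneg h₂₃.le (by exact_mod_cast int_t_nonneg (n 1 - n 2))
    have g8 : (0:ℝ) ≤ r₂₄*(((n 1-n 3)*(n 1-n 3-1) : ℤ) : ℝ) :=
      mul_nonneg h₂₄.le (by exact_mod_cast int_t_nonneg (n 1 - n 3))
    have g9 : (0:ℝ) ≤ r*((2*(n 0*n 0+n 1*n 1+n 2*n 2+n 3*n 3) + 2*(n 0)*(n 1)
        - 2*(n 0+n 1)*(n 2+n 3) - 4*(n 0) - 4*(n 1) + 2*(n 2) + 2*(n 3) + 2 : ℤ) : ℝ) :=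
      mul_nonneg hr.le (by exact_mod_cast gInt_nonneg (n 0) (n 1) (n 2) (n 3))
    have e1 : (n 0*(n 0-1) : ℤ) = 0 := by
      have hz : ((n 0*(n 0-1) : ℤ) : ℝ) = 0 :=
        coordzero h₁ (by linarith) (by exact_mod_cast int_t_nonneg (n 0))
      exact_mod_cast hz
    have e2 : (n 1*(n 1-1) : ℤ) = 0 := by
      have hz : ((n 1*(n 1-1) : ℤ) : ℝ) = 0 :=
        coordzero h₂ (by linarith) (by exact_mod_cast int_t_nonneg (n 1))
      exact_mod_cast hz
    have e3 : (n 2*(n 2-1) : ℤ) = 0 := by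
      have hz : ((n 2*(n 2-1) : ℤ) : ℝ) = 0 :=
        coordzero h₃ (by linarith) (by exact_mod_cast int_t_nonneg (n 2))
      exact_mod_cast hz
    have e4 : (n 3*(n 3-1) : ℤ) = 0 := by
      have hz : ((n 3*(n 3-1) : ℤ) : ℝ) = 0 :=
        coordzero h₄ (by linarith) (by exact_mod_cast int_t_nonneg (n 3))
      exact_mod_cast hz
    have e5 : ((n 0-n 2)*(n 0-n 2-1) : ℤ) = 0 := by
      have hz : (((n 0-n 2)*(n 0-n 2-1) : ℤ) : ℝ) = 0 :=
        coordzero h₁₃ (by linarith) (by exact_mod_cast int_t_nonneg (n 0 - n 2))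
      exact_mod_cast hz
    have e6 : ((n 0-n 3)*(n 0-n 3-1) : ℤ) = 0 := by
      have hz : (((n 0-n 3)*(n 0-n 3-1) : ℤ) : ℝ) = 0 :=
        coordzero h₁₄ (by linarith) (by exact_mod_cast int_t_nonneg (n 0 - n 3))
      exact_mod_cast hz
    have e7 : ((n 1-n 2)*(n 1-n 2-1) : ℤ) = 0 := by
      have hz : (((n 1-n 2)*(n 1-n 2-1) : ℤ) : ℝ) = 0 :=
        coordzero h₂₃ (by linarith) (by exact_mod_cast int_t_nonneg (n 1 - n 2))
      exact_mod_cast hz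
    have e8 : ((n 1-n 3)*(n 1-n 3-1) : ℤ) = 0 := by
      have hz : (((n 1-n 3)*(n 1-n 3-1) : ℤ) : ℝ) = 0 :=
        coordzero h₂₄ (by linarith) (by exact_mod_cast int_t_nonneg (n 1 - n 3))
      exact_mod_cast hz
    have e9 : (2*(n 0*n 0+n 1*n 1+n 2*n 2+n 3*n 3) + 2*(n 0)*(n 1) - 2*(n 0+n 1)*(n 2+n 3) - 4*(n 0) - 4*(n 1) + 2*(n 2) + 2*(n 3) + 2 : ℤ) = 0 := by
      have hz : ((2*(n 0*n 0+n 1*n 1+n 2*n 2+n 3*n 3) + 2*(n 0)*(n 1) - 2*(n 0+n 1)*(n 2+n 3) - 4*(n 0) - 4*(n 1) + 2*(n 2) + 2*(n 3) + 2 : ℤ) : ℝ) = 0 :=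
        coordzero hr (by linarith) (by exact_mod_cast gInt_nonneg (n 0) (n 1) (n 2) (n 3))
      exact_mod_cast hz
    have hc := six_char (n 0) (n 1) (n 2) (n 3) e1 e2 e3 e4 e5 e6 e7 e8 e9
    rcases hc with ⟨ha0,ha1,ha2,ha3⟩|⟨ha0,ha1,ha2,ha3⟩|⟨ha0,ha1,ha2,ha3⟩|⟨ha0,ha1,ha2,ha3⟩|⟨ha0,ha1,ha2,ha3⟩|⟨ha0,ha1,ha2,ha3⟩
    · exact Or.inl (by funext i; fin_cases i <;> simp [stdV, ha0, ha1, ha2, ha3, Pi.single_apply])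
    · exact Or.inr (Or.inl (by funext i; fin_cases i <;> simp [stdV, ha0, ha1, ha2, ha3, Pi.single_apply]))
    · exact Or.inr (Or.inr (Or.inl (by funext i; fin_cases i <;> simp [stdV, ha0, ha1, ha2, ha3, Pi.single_apply])))
    · exact Or.inr (Or.inr (Or.inr (Or.inl (by funext i; fin_cases i <;> simp [stdV, ha0, ha1, ha2, ha3, Pi.single_apply]))))
    · exact Or.inr (Or.inr (Or.inr (Or.inr (Or.inl (by funext i; fin_cases i <;> simp [stdV, ha0, ha1, ha2, ha3, Pi.single_apply])))))
    · exact Or.inr (Or.inr (Or.inr (Or.inr (Or.inr (by funext i; fin_cases i <;> simp [stdV, ha0, ha1, ha2, ha3, Pi.single_apply])))))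
  · intro ha
    have main : ∀ n : Fin 4 → ℤ,
        ((fun i => ((n i : ℝ))) ⬝ᵥ (MV2V3 r₁ r₂ r₃ r₄ r₁₃ r₁₄ r₂₃ r₂₄ r).mulVec (fun i => ((n i : ℝ)))
          - (fun i => ((n i : ℝ))) ⬝ᵥ ![r₁+r₁₃+r₁₄+4*r, r₂+r₂₃+r₂₄+4*r, r₃-r₁₃-r₂₃-2*r, r₄-r₁₄-r₂₄-2*r] = -(2*r)) →
        (fun i => ((n i : ℝ))) ∈ latticePts 4 ∧ ∀ b ∈ latticePts 4,
          ((fun i => ((n i : ℝ))) - α) ⬝ᵥ (MV2V3 r₁ r₂ r₃ r₄ r₁₃ r₁₄ r₂₃ r₂₄ r).mulVec ((fun i => ((n i : ℝ))) - α)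
            ≤ (b - α) ⬝ᵥ (MV2V3 r₁ r₂ r₃ r₄ r₁₃ r₁₄ r₂₃ r₂₄ r).mulVec (b - α) := by
      intro n hFn
      refine ⟨⟨n, rfl⟩, ?_⟩
      rintro b ⟨m, rfl⟩
      rw [hshift, hshift]
      have := hFle m
      linarith
    rcases ha with rfl|rfl|rfl|rfl|rfl|rfl
    · exact (hz1 ▸ main ![1,0,0,0] hF1 : _)
    · exact (hz2 ▸ main ![0,1,0,0] hF2 : _)
    · exact (hz3 ▸ main ![1,1,0,0] hF3 : _)
    · exact (hz4 ▸ main ![1,1,1,0] hF4 : _)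
    · exact (hz5 ▸ main ![1,1,0,1] hF5 : _)
    · exact (hz6 ▸ main ![1,1,1,1] hF6 : _)


private lemma split_lemma {E : Type*} [AddCommGroup E] [Module ℝ E]
    (p q u w : E) (T : Set E) (hT : T.Nonempty) (h : p + q = u + w)
    (hu : u ∈ T) (hw : w ∈ T) :
    convexHull ℝ (insert p (insert q T)) ⊆
      convexHull ℝ (insert p T) ∪ convexHull ℝ (insert q T) := by
  intro x hx
  rw [convexHull_insert (Set.insert_nonempty q T), mem_convexJoin] at hx
  simp only [Set.mem_singleton_iff, exists_eq_left] at hx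
  obtain ⟨y, hy, hseg⟩ := hx
  rw [convexHull_insert hT, mem_convexJoin] at hy
  simp only [Set.mem_singleton_iff, exists_eq_left] at hy
  obtain ⟨z, hz, hseg2⟩ := hy
  obtain ⟨a, b, ha, hb, hab, rfl⟩ := hseg
  obtain ⟨c, d, hc, hd, hcd, rfl⟩ := hseg2
  rcases le_total a (b * c) with hle | hle
  · right
    have hz' : z ∈ convexHull ℝ (insert q T) :=
      convexHull_mono (Set.subset_insert q T) hz
    have hq' : q ∈ convexHull ℝ (insert q T) :=
      subset_convexHull ℝ _ (Set.mem_insert q T)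
    have hu' : u ∈ convexHull ℝ (insert q T) :=
      subset_convexHull ℝ _ (Set.mem_insert_of_mem q hu)
    have hw' : w ∈ convexHull ℝ (insert q T) :=
      subset_convexHull ℝ _ (Set.mem_insert_of_mem q hw)
    have hx4 : a • p + b • (c • q + d • z)
        = a • u + a • w + (b * c - a) • q + (b * d) • z := by
      linear_combination (norm := module) a • h
    rw [hx4]
    have key := (convex_convexHull ℝ (insert q T)).sum_mem
      (t := (Finset.univ : Finset (Fin 4)))
      (w := ![a, a, b * c - a, b * d]) (z := ![u, w, q, z]) ?_ ?_ ?_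
    · convert key using 1
      simp [Fin.sum_univ_four]
    · intro i _
      fin_cases i
      · simpa using ha
      · simpa using ha
      · simpa using by linarith
      · simpa using mul_nonneg hb hd
    · simp [Fin.sum_univ_four]
      linear_combination hab + b * hcd
    · intro i _
      fin_cases i
      · simpa using hu'
      · simpa using hw'
      · simpa using hq'
      · simpa using hz'
  · left
    have hz' : z ∈ convexHull ℝ (insert p T) :=
      convexHull_mono (Set.subset_insert p T) hz
    have hp' : p ∈ convexHull ℝ (insert p T) :=
      subset_convexHull ℝ _ (Set.mem_insert p T)
    have hu' : u ∈ convexHull ℝ (insert p T) :=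
      subset_convexHull ℝ _ (Set.mem_insert_of_mem p hu)
    have hw' : w ∈ convexHull ℝ (insert p T) :=
      subset_convexHull ℝ _ (Set.mem_insert_of_mem p hw)
    have hx4 : a • p + b • (c • q + d • z)
        = (a - b * c) • p + (b * c) • u + (b * c) • w + (b * d) • z := by
      linear_combination (norm := module) (b * c) • h
    rw [hx4]
    have key := (convex_convexHull ℝ (insert p T)).sum_mem
      (t := (Finset.univ : Finset (Fin 4)))
      (w := ![a - b * c, b * c, b * c, b * d]) (z := ![p, u, w, z]) ?_ ?_ ?_
    · convert key using 1
      simp [Fin.sum_univ_four]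
    · intro i _
      fin_cases i
      · simpa using by linarith
      · simpa using mul_nonneg hb hc
      · simpa using mul_nonneg hb hc
      · simpa using mul_nonneg hb hd
    · simp [Fin.sum_univ_four]
      linear_combination hab + b * hcd
    · intro i _
      fin_cases i
      · simpa using hp'
      · simpa using hu'
      · simpa using hw'
      · simpa using hz'


/-- For `B` in the relative interior of `V₂ ∩ V₃`, the set
`conv{s₁, s₂, s₁+s₂, s₁+s₂+s₃, s₁+s₂+s₄, s₁+s₂+s₃+s₄}` is a Delaunay cell, and it
decomposes in two ways as a union of two simplices. -/
theorem delaunay_fusion_V2_V3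
    (r₁ r₂ r₃ r₄ r₁₃ r₁₄ r₂₃ r₂₄ r : ℝ)
    (h₁ : 0 < r₁) (h₂ : 0 < r₂) (h₃ : 0 < r₃) (h₄ : 0 < r₄)
    (h₁₃ : 0 < r₁₃) (h₁₄ : 0 < r₁₄)
    (h₂₃ : 0 < r₂₃) (h₂₄ : 0 < r₂₄) (hr : 0 < r) :
    IsDelaunayCell
      (fun x y => x ⬝ᵥ (MV2V3 r₁ r₂ r₃ r₄ r₁₃ r₁₄ r₂₃ r₂₄ r).mulVec y)
      (convexHull ℝ
        {stdV 4 0, stdV 4 1, stdV 4 0 + stdV 4 1,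
          stdV 4 0 + stdV 4 1 + stdV 4 2, stdV 4 0 + stdV 4 1 + stdV 4 3,
          stdV 4 0 + stdV 4 1 + stdV 4 2 + stdV 4 3}) ∧
    convexHull ℝ
        {stdV 4 0, stdV 4 1, stdV 4 0 + stdV 4 1,
          stdV 4 0 + stdV 4 1 + stdV 4 2, stdV 4 0 + stdV 4 1 + stdV 4 3,
          stdV 4 0 + stdV 4 1 + stdV 4 2 + stdV 4 3} =
      convexHull ℝ
        {stdV 4 0, stdV 4 1, stdV 4 0 + stdV 4 1,
          stdV 4 0 + stdV 4 1 + stdV 4 2,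
          stdV 4 0 + stdV 4 1 + stdV 4 2 + stdV 4 3} ∪
      convexHull ℝ
        {stdV 4 0, stdV 4 1, stdV 4 0 + stdV 4 1,
          stdV 4 0 + stdV 4 1 + stdV 4 3,
          stdV 4 0 + stdV 4 1 + stdV 4 2 + stdV 4 3} ∧
    convexHull ℝ
        {stdV 4 0, stdV 4 1, stdV 4 0 + stdV 4 1,
          stdV 4 0 + stdV 4 1 + stdV 4 2, stdV 4 0 + stdV 4 1 + stdV 4 3,
          stdV 4 0 + stdV 4 1 + stdV 4 2 + stdV 4 3} =
      convexHull ℝ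
        {stdV 4 0, stdV 4 1, stdV 4 0 + stdV 4 1,
          stdV 4 0 + stdV 4 1 + stdV 4 2, stdV 4 0 + stdV 4 1 + stdV 4 3} ∪
      convexHull ℝ
        {stdV 4 0, stdV 4 1,
          stdV 4 0 + stdV 4 1 + stdV 4 2, stdV 4 0 + stdV 4 1 + stdV 4 3,
          stdV 4 0 + stdV 4 1 + stdV 4 2 + stdV 4 3} := by
  set v1 : Fin 4 → ℝ := stdV 4 0 with hv1
  set v2 : Fin 4 → ℝ := stdV 4 1 with hv2
  set v3 : Fin 4 → ℝ := stdV 4 0 + stdV 4 1 with hv3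
  set v4 : Fin 4 → ℝ := stdV 4 0 + stdV 4 1 + stdV 4 2 with hv4
  set v5 : Fin 4 → ℝ := stdV 4 0 + stdV 4 1 + stdV 4 3 with hv5
  set v6 : Fin 4 → ℝ := stdV 4 0 + stdV 4 1 + stdV 4 2 + stdV 4 3 with hv6
  have hrel : v3 + v6 = v4 + v5 := by
    rw [hv3, hv4, hv5, hv6]
    funext i
    fin_cases i <;> simp [stdV, Pi.single_apply]
  refine ⟨?_, ?_, ?_⟩
  · obtain ⟨α, hα⟩ := exists_alpha r₁ r₂ r₃ r₄ r₁₃ r₁₄ r₂₃ r₂₄ r h₁ h₂ h₃ h₄ h₁₃ h₁₄ h₂₃ h₂₄ hr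
    refine ⟨α, ?_⟩
    have hms := minimizer_set_eq r₁ r₂ r₃ r₄ r₁₃ r₁₄ r₂₃ r₂₄ r h₁ h₂ h₃ h₄ h₁₃ h₁₄ h₂₃ h₂₄ hr α hα
    rw [show {a | a ∈ latticePts 4 ∧ ∀ b ∈ latticePts 4,
        (fun x y => x ⬝ᵥ (MV2V3 r₁ r₂ r₃ r₄ r₁₃ r₁₄ r₂₃ r₂₄ r).mulVec y) (a - α) (a - α) ≤
          (fun x y => x ⬝ᵥ (MV2V3 r₁ r₂ r₃ r₄ r₁₃ r₁₄ r₂₃ r₂₄ r).mulVec y) (b - α) (b - α)}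
      = {a | a ∈ latticePts 4 ∧ ∀ b ∈ latticePts 4,
        (a - α) ⬝ᵥ (MV2V3 r₁ r₂ r₃ r₄ r₁₃ r₁₄ r₂₃ r₂₄ r).mulVec (a - α) ≤
          (b - α) ⬝ᵥ (MV2V3 r₁ r₂ r₃ r₄ r₁₃ r₁₄ r₂₃ r₂₄ r).mulVec (b - α)} from rfl, hms]
  · apply Set.Subset.antisymm
    · have hset : ({v1, v2, v3, v4, v5, v6} : Set (Fin 4 → ℝ))
          = insert v4 (insert v5 {v1, v2, v3, v6}) := by
        ext x; simp only [Set.mem_insert_iff, Set.mem_singleton_iff]; tauto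
      rw [hset]
      have hsub := split_lemma v4 v5 v3 v6 {v1, v2, v3, v6}
        ⟨v1, by simp⟩ hrel.symm (by simp) (by simp)
      refine hsub.trans ?_
      have e1 : insert v4 ({v1, v2, v3, v6} : Set (Fin 4 → ℝ)) = {v1, v2, v3, v4, v6} := by
        ext x; simp only [Set.mem_insert_iff, Set.mem_singleton_iff]; tauto
      have e2 : insert v5 ({v1, v2, v3, v6} : Set (Fin 4 → ℝ)) = {v1, v2, v3, v5, v6} := by
        ext x; simp only [Set.mem_insert_iff, Set.mem_singleton_iff]; tauto
      rw [e1, e2]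
    · apply Set.union_subset <;> apply convexHull_mono <;> intro x hx <;>
        simp only [Set.mem_insert_iff, Set.mem_singleton_iff] at hx ⊢ <;> tauto
  · apply Set.Subset.antisymm
    · have hset : ({v1, v2, v3, v4, v5, v6} : Set (Fin 4 → ℝ))
          = insert v3 (insert v6 {v1, v2, v4, v5}) := by
        ext x; simp only [Set.mem_insert_iff, Set.mem_singleton_iff]; tauto
      rw [hset]
      have hsub := split_lemma v3 v6 v4 v5 {v1, v2, v4, v5}
        ⟨v1, by simp⟩ hrel (by simp) (by simp)
      refine hsub.trans ?_
      have e1 : insert v3 ({v1, v2, v4, v5} : Set (Fin 4 → ℝ)) = {v1, v2, v3, v4, v5} := by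
        ext x; simp only [Set.mem_insert_iff, Set.mem_singleton_iff]; tauto
      have e2 : insert v6 ({v1, v2, v4, v5} : Set (Fin 4 → ℝ)) = {v1, v2, v4, v5, v6} := by
        ext x; simp only [Set.mem_insert_iff, Set.mem_singleton_iff]; tauto
      rw [e1, e2]
    · apply Set.union_subset <;> apply convexHull_mono <;> intro x hx <;>
        simp only [Set.mem_insert_iff, Set.mem_singleton_iff] at hx ⊢ <;> tauto
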